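/- Let U ∈ U(r) be a unitary matrix whose top-left n×n block is diagonal with real entries d_1,...,d_n. Then the maximum over eigenvalues λ of U of |arg λ| is at least max_{1≤i≤n} arccos(d_i). (Lower-bound direction of the exact formula for the partial-U problem with diagonal fixed block.) -/

import Mathlib

open Matrix

set_option maxHeartbeats 2000000 in
/-- If the top-left `n × n` block of a unitary `U ∈ U(r)` is diagonal with real
entries `d i`, then for each `i` some eigenvalue `μ` of `U` satisfies
`|arg μ| ≥ arccos (d i)`; i.e. `max_λ |arg λ| ≥ max_i arccos (d i)`. -/
theorem cost_ge_arccos_diag_block {n r : ℕ} (h : n ≤ r)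
    (U : Matrix (Fin r) (Fin r) ℂ) (hU : U ∈ Matrix.unitaryGroup (Fin r) ℂ)
    (d : Fin n → ℝ)
    (hdiag : ∀ i j : Fin n, i ≠ j → U (Fin.castLE h i) (Fin.castLE h j) = 0)
    (hd : ∀ i : Fin n, U (Fin.castLE h i) (Fin.castLE h i) = (d i : ℂ)) :
    ∀ i : Fin n, ∃ μ ∈ spectrum ℂ U, Real.arccos (d i) ≤ |Complex.arg μ| := by
  intro i
  set i' : Fin r := Fin.castLE h i with hi'
  haveI : Nonempty (Fin r) := ⟨i'⟩
  set u : EuclideanSpace ℂ (Fin r) →L[ℂ] EuclideanSpace ℂ (Fin r) :=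
    Matrix.toEuclideanCLM (n := Fin r) (𝕜 := ℂ) U with hu_def
  have hspec : spectrum ℂ u = spectrum ℂ U :=
    AlgEquiv.spectrum_eq (Matrix.toEuclideanCLM (n := Fin r) (𝕜 := ℂ)) U
  have hUu : star U * U = 1 := Matrix.mem_unitaryGroup_iff'.mp hU
  have hUu' : U * star U = 1 := Matrix.mem_unitaryGroup_iff.mp hU
  have hu : u ∈ unitary (EuclideanSpace ℂ (Fin r) →L[ℂ] EuclideanSpace ℂ (Fin r)) := by
    constructor
    · rw [hu_def, ← map_star, ← _root_.map_mul, hUu, _root_.map_one]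
    · rw [hu_def, ← map_star, ← _root_.map_mul, hUu', _root_.map_one]
  haveI hnorm : IsStarNormal u := isStarNormal_of_mem_unitary hu
  have hne : (spectrum ℂ u).Nonempty := by
    rw [hspec]
    exact spectrum.nonempty_of_isAlgClosed_of_finiteDimensional ℂ U
  obtain ⟨μ, hμmem, hμmin⟩ :=
    (spectrum.isCompact (𝕜 := ℂ) (a := u)).exists_isMinOn hne
      Complex.continuous_re.continuousOn
  set c := μ.re with hc
  set x : EuclideanSpace ℂ (Fin r) := EuclideanSpace.single i' (1 : ℂ) with hx
  -- basic inner product computations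
  have hux : inner (𝕜 := ℂ) (u x) x = (d i : ℂ) := by
    rw [hx, EuclideanSpace.inner_single_right]
    have hrw : u (EuclideanSpace.single i' (1 : ℂ)) =
        (WithLp.equiv 2 _).symm (Matrix.toLin' U (Pi.single i' (1 : ℂ))) := rfl
    rw [hrw]
    simp [Matrix.toLin'_apply, Matrix.mulVec_single, hd i, Complex.conj_ofReal]
    rw [show U i' i' = d i from hd i, Complex.conj_ofReal]
  have hsux : inner (𝕜 := ℂ) ((star u) x) x = (d i : ℂ) := by
    have hstar : star u = Matrix.toEuclideanCLM (n := Fin r) (𝕜 := ℂ) (star U) := by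
      rw [hu_def, map_star]
    rw [hstar, hx, EuclideanSpace.inner_single_right]
    have hrw : Matrix.toEuclideanCLM (n := Fin r) (𝕜 := ℂ) (star U)
        (EuclideanSpace.single i' (1 : ℂ)) =
        (WithLp.equiv 2 _).symm (Matrix.toLin' (star U) (Pi.single i' (1 : ℂ))) := rfl
    rw [hrw]
    simp [Matrix.toLin'_apply, Matrix.mulVec_single, Matrix.star_apply, hd i,
      Complex.conj_ofReal]
    exact hd i
  have hxx : inner (𝕜 := ℂ) x x = 1 := by
    rw [hx, EuclideanSpace.inner_single_right]
    simp
  -- the selfadjoint operator b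
  set b : EuclideanSpace ℂ (Fin r) →L[ℂ] EuclideanSpace ℂ (Fin r) :=
    u + star u - algebraMap ℂ _ (((2 * c : ℝ) : ℂ)) with hb
  have hcont1 : ContinuousOn (fun z : ℂ => z + star z) (spectrum ℂ u) :=
    (continuous_id.add continuous_star).continuousOn
  have hcfc : cfc (fun z : ℂ => z + star z - ((2 * c : ℝ) : ℂ)) u = b := by
    have e1 : cfc (fun z : ℂ => z + star z - ((2 * c : ℝ) : ℂ)) u
        = cfc (fun z : ℂ => z + star z) u - cfc (fun _ : ℂ => ((2 * c : ℝ) : ℂ)) u :=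
      cfc_sub (fun z : ℂ => z + star z) (fun _ : ℂ => ((2 * c : ℝ) : ℂ)) u hcont1
        continuousOn_const
    have e2 : cfc (fun z : ℂ => z + star z) u = u + star u := by
      rw [cfc_add (a := u) (fun z : ℂ => z) (fun z : ℂ => star z)
        continuous_id.continuousOn continuous_star.continuousOn,
        cfc_id' ℂ (a := u) hnorm, cfc_star_id (a := u) hnorm]
    rw [e1, e2, cfc_const _ u hnorm, hb]
  have hstar2c : star (((2 * c : ℝ) : ℂ)) = (((2 * c : ℝ) : ℂ)) := by
    simp [Complex.star_def, Complex.conj_ofReal]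
  have hk : _root_.IsSelfAdjoint ((algebraMap ℂ
      (EuclideanSpace ℂ (Fin r) →L[ℂ] EuclideanSpace ℂ (Fin r))) (((2 * c : ℝ) : ℂ))) :=
    IsSelfAdjoint.algebraMap _ hstar2c
  have hb_sa : _root_.IsSelfAdjoint b := by
    rw [hb]
    exact (IsSelfAdjoint.add_star_self u).sub hk
  have hbspec : ∀ t ∈ spectrum ℝ b, 0 ≤ t := by
    intro t ht
    have htc : (algebraMap ℝ ℂ t) ∈ spectrum ℂ b := spectrum.algebraMap_mem ℂ ht
    rw [← hcfc, cfc_map_spectrum (f := fun z : ℂ => z + star z - ((2 * c : ℝ) : ℂ)) (a := u) hnorm (hcont1.sub continuousOn_const)] at htc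
    obtain ⟨z, hz, hzeq⟩ := htc
    have hcz : c ≤ z.re := hμmin hz
    have hre := congrArg Complex.re hzeq
    simp only [Complex.add_re, Complex.sub_re, Complex.ofReal_re, Complex.star_def,
      Complex.conj_re, Complex.coe_algebraMap] at hre
    linarith
  have hb_nonneg : (0 : EuclideanSpace ℂ (Fin r) →L[ℂ] EuclideanSpace ℂ (Fin r)) ≤ b :=
    (StarOrderedRing.nonneg_iff_spectrum_nonneg (R := ℝ) b hb_sa).mpr hbspec
  have hb_pos : b.IsPositive := (ContinuousLinearMap.nonneg_iff_isPositive b).mp hb_nonneg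
  have hinner := hb_pos.inner_nonneg_left x
  have halg : (algebraMap ℂ (EuclideanSpace ℂ (Fin r) →L[ℂ] EuclideanSpace ℂ (Fin r))
      (((2 * c : ℝ) : ℂ))) x = (((2 * c : ℝ) : ℂ)) • x := by
    rw [Algebra.algebraMap_eq_smul_one]
    rfl
  have hbxx : inner (𝕜 := ℂ) (b x) x = (((2 * d i - 2 * c : ℝ)) : ℂ) := by
    rw [hb, ContinuousLinearMap.sub_apply, ContinuousLinearMap.add_apply,
      inner_sub_left, inner_add_left, hux, hsux, halg, inner_smul_left, hxx,
      mul_one]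
    simp only [Complex.conj_ofReal]
    push_cast
    ring
  have hcd : c ≤ d i := by
    rw [hbxx] at hinner
    have h0 : (0 : ℝ) ≤ 2 * d i - 2 * c := Complex.zero_le_real.mp hinner
    linarith
  -- transfer back to the matrix and conclude
  have hμU : μ ∈ spectrum ℂ U := hspec ▸ hμmem
  have habs : ‖μ‖ = 1 := by
    have hcirc := spectrum.subset_circle_of_unitary hu hμmem
    simpa [Complex.dist_eq] using hcirc
  have hμne : μ ≠ 0 := by
    intro hzero
    rw [hzero] at habs
    simp at habs
  have h1 : Real.cos |μ.arg| = μ.re := by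
    rw [Real.cos_abs, Complex.cos_arg hμne, habs, div_one]
  refine ⟨μ, hμU, ?_⟩
  have h2 : |μ.arg| = Real.arccos μ.re := by
    rw [← h1, Real.arccos_cos (abs_nonneg _) (Complex.abs_arg_le_pi μ)]
  rw [h2]
  simp only [Real.arccos]
  exact sub_le_sub_left (Real.monotone_arcsin hcd) _
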